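/- (No-cloning theorem) If the Hilbert space H has dimension at least 2, there is no unitary operator U on H ⊗ H such that U(ψ ⊗ φ₀) = ψ ⊗ ψ for all unit vectors ψ ∈ H, where φ₀ is a fixed unit vector. -/

import Mathlib

open Matrix
open scoped ComplexConjugate

/-- Dot product of tensor products factors. -/
lemma tensor_dot {n : ℕ} (a b c d : Fin n → ℂ) :
    star (fun p : Fin n × Fin n => a p.1 * b p.2) ⬝ᵥ (fun p => c p.1 * d p.2)
      = (star a ⬝ᵥ c) * (star b ⬝ᵥ d) := by
  simp only [dotProduct, Pi.star_apply, star_mul']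
  rw [Fintype.sum_prod_type, Finset.sum_mul_sum]
  refine Finset.sum_congr rfl fun i _ => Finset.sum_congr rfl fun j _ => ?_
  ring

/-- Unitary matrices preserve the hermitian dot product. -/
lemma unitary_dot {m : Type*} [Fintype m] [DecidableEq m]
    (U : Matrix m m ℂ) (hU : U ∈ Matrix.unitaryGroup m ℂ) (x y : m → ℂ) :
    star (U.mulVec x) ⬝ᵥ (U.mulVec y) = star x ⬝ᵥ y := by
  have h : Uᴴ * U = 1 := hU.1
  rw [Matrix.star_mulVec, Matrix.dotProduct_mulVec, Matrix.vecMul_vecMul, h,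
    Matrix.vecMul_one]

lemma dot_eq_inner {n : ℕ} (x y : EuclideanSpace ℂ (Fin n)) :
    star (x : Fin n → ℂ) ⬝ᵥ (y : Fin n → ℂ) = inner ℂ x y := by
  simp [dotProduct, PiLp.inner_apply, mul_comm]

theorem no_cloning {n : ℕ} (hn : 2 ≤ n)
    (φ₀ : EuclideanSpace ℂ (Fin n)) (hφ₀ : ‖φ₀‖ = 1) :
    ¬ ∃ U ∈ Matrix.unitaryGroup (Fin n × Fin n) ℂ,
        ∀ ψ : EuclideanSpace ℂ (Fin n), ‖ψ‖ = 1 →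
          (U : Matrix (Fin n × Fin n) (Fin n × Fin n) ℂ).mulVec
              (fun p => ψ p.1 * φ₀ p.2)
            = fun p => ψ p.1 * ψ p.2 := by
  rintro ⟨U, hU, hclone⟩
  set i0 : Fin n := ⟨0, by omega⟩
  set i1 : Fin n := ⟨1, by omega⟩
  have hne : i0 ≠ i1 := by
    intro h
    have := congrArg Fin.val h
    simp [i0, i1] at this
  set ψ₁ : EuclideanSpace ℂ (Fin n) := EuclideanSpace.single i0 1 with hψ₁def
  set ψ₂ : EuclideanSpace ℂ (Fin n) :=
      ((Real.sqrt 2 : ℂ))⁻¹ • (EuclideanSpace.single i0 1 + EuclideanSpace.single i1 1)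
      with hψ₂def
  have sqrt2_pos : (0:ℝ) < Real.sqrt 2 := Real.sqrt_pos.mpr (by norm_num)
  have sqrt2_sq : Real.sqrt 2 ^ 2 = 2 := Real.sq_sqrt (by norm_num)
  have hψ₁ : ‖ψ₁‖ = 1 := by simp [hψ₁def]
  have horth : (inner ℂ (EuclideanSpace.single i0 (1:ℂ)) (EuclideanSpace.single i1 (1:ℂ)) : ℂ) = 0 := by
    simp [EuclideanSpace.inner_single_left, EuclideanSpace.single_apply, hne.symm]
  have hsum : ‖(EuclideanSpace.single i0 (1:ℂ) + EuclideanSpace.single i1 1 : EuclideanSpace ℂ (Fin n))‖ = Real.sqrt 2 := by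
    have h2 : ‖(EuclideanSpace.single i0 (1:ℂ) + EuclideanSpace.single i1 1 : EuclideanSpace ℂ (Fin n))‖ ^ 2 = 2 := by
      rw [sq, norm_add_sq_eq_norm_sq_add_norm_sq_of_inner_eq_zero _ _ horth]
      simp
      norm_num
    have hnn : (0:ℝ) ≤ ‖(EuclideanSpace.single i0 (1:ℂ) + EuclideanSpace.single i1 1 : EuclideanSpace ℂ (Fin n))‖ := norm_nonneg _
    nlinarith [Real.sqrt_nonneg 2]
  have hψ₂ : ‖ψ₂‖ = 1 := by
    rw [hψ₂def, norm_smul, hsum]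
    rw [norm_inv]
    rw [Complex.norm_real, Real.norm_eq_abs, abs_of_pos sqrt2_pos]
    field_simp
  have hc : (inner ℂ ψ₁ ψ₂ : ℂ) = ((Real.sqrt 2 : ℂ))⁻¹ := by
    rw [hψ₁def, hψ₂def, inner_smul_right, inner_add_right, horth]
    simp
  have hφφ : (inner ℂ φ₀ φ₀ : ℂ) = 1 := by
    rw [inner_self_eq_norm_sq_to_K, hφ₀]; norm_num
  have h1 := hclone ψ₁ hψ₁
  have h2 := hclone ψ₂ hψ₂
  have key := unitary_dot U hU (fun p => ψ₁ p.1 * φ₀ p.2) (fun p => ψ₂ p.1 * φ₀ p.2)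
  rw [h1, h2] at key
  rw [tensor_dot, tensor_dot] at key
  rw [dot_eq_inner, dot_eq_inner] at key
  rw [hc, hφφ] at key
  -- key : (√2)⁻¹ * (√2)⁻¹ = (√2)⁻¹ * 1  (or the reverse)
  have hs0 : ((Real.sqrt 2 : ℂ)) ≠ 0 := by
    simp only [ne_eq, Complex.ofReal_eq_zero]
    exact ne_of_gt sqrt2_pos
  have hinv0 : ((Real.sqrt 2 : ℂ))⁻¹ ≠ 0 := inv_ne_zero hs0
  have h1eq : ((Real.sqrt 2 : ℂ))⁻¹ = 1 := mul_left_cancel₀ hinv0 key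
  have : ((Real.sqrt 2 : ℂ)) = 1 := by
    rwa [inv_eq_one] at h1eq
  have : Real.sqrt 2 = 1 := by exact_mod_cast this
  nlinarith
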